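/- Let L ⊆ X be a closed subspace, p a peak selection of E with respect to L, and suppose E satisfies the Palais–Smale condition. Fix λ > 0 and let {v^k} ⊂ S_{L⊥}, w^k = p(v^k) = u^k + t^k v^k (with u^k ∈ L, t^k ≥ 0) be generated by the local minimax iteration: d^k ∈ X is the Riesz representative of −E'(w^k), i.e. (d^k, v) = −⟨E'(w^k), v⟩ for all v ∈ X; v^k(s) = (v^k + s d^k)/‖v^k + s d^k‖ for s > 0; and v^{k+1} = v^k(s^k) with step size s^k = λ/2^{m_k}, where m_k ∈ ℤ is the minimal integer such that 2^{m_k} > ‖d^k‖ and E(p(v^k(λ/2^{m_k}))) − E(w^k) ≤ −(1/2) t^k ‖d^k‖ ‖v^k(λ/2^{m_k}) − v^k‖. Assume: (a) p is continuous; (b) inf_{u∈L} ‖w^k − u‖ ≥ α for all k = 0, 1, 2, …, for some constant α > 0; (c) inf_{v∈S_{L⊥}} E(p(v)) > −∞. Then {w^k} has a convergent subsequence, and any convergent subsequence of {w^k} converges to a critical point of E. -/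

import Mathlib

open Filter
open scoped RealInnerProductSpace

/-- The closed half space `L_v = L + {t v : t ≥ 0}`. -/
def halfSpace {X : Type*} [NormedAddCommGroup X] [InnerProductSpace ℝ X]
    (L : Submodule ℝ X) (v : X) : Set X :=
  {w | ∃ u ∈ L, ∃ t : ℝ, 0 ≤ t ∧ w = u + t • v}

/-- `w₀` is a local maximum of `E` in the half space `L_v`. -/
def IsLocalMaxIn {X : Type*} [NormedAddCommGroup X] [InnerProductSpace ℝ X]
    (E : X → ℝ) (L : Submodule ℝ X) (v w₀ : X) : Prop :=
  w₀ ∈ halfSpace L v ∧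
    ∃ δ > (0 : ℝ), ∀ w ∈ halfSpace L v, ‖w - w₀‖ < δ → E w ≤ E w₀

section LMMaux
variable {X : Type*} [NormedAddCommGroup X] [InnerProductSpace ℝ X]

lemma LMM_hasDerivAt_line (E : X → ℝ) (E' : X → X →L[ℝ] ℝ)
    (hE : ∀ x, HasFDerivAt E (E' x) x) (a y : X) (τ₀ : ℝ) :
    HasDerivAt (fun τ : ℝ => E (a + τ • y)) (E' (a + τ₀ • y) y) τ₀ := by
  have h1 : HasDerivAt (fun τ : ℝ => a + τ • y) y τ₀ := by
    simpa using ((hasDerivAt_id τ₀).smul_const y).const_add a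
  exact (hE (a + τ₀ • y)).comp_hasDerivAt τ₀ h1

lemma LMM_deriv_zero_L (E : X → ℝ) (E' : X → X →L[ℝ] ℝ)
    (hE : ∀ x, HasFDerivAt E (E' x) x)
    {L : Submodule ℝ X} {v w₀ : X} (hmax : IsLocalMaxIn E L v w₀) :
    ∀ y ∈ L, E' w₀ y = 0 := by
  intro y hy
  obtain ⟨⟨u0, hu0, t0, ht0, hw0⟩, δ, hδ, hloc⟩ := hmax
  have hg : HasDerivAt (fun τ : ℝ => E (w₀ + τ • y)) (E' w₀ y) 0 := by
    simpa using LMM_hasDerivAt_line E E' hE w₀ y 0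
  have hmax0 : IsLocalMax (fun τ : ℝ => E (w₀ + τ • y)) 0 := by
    rw [IsLocalMax, IsMaxFilter, Metric.eventually_nhds_iff]
    refine ⟨δ / (‖y‖ + 1), by positivity, ?_⟩
    intro τ hτ
    rw [Real.dist_eq, sub_zero] at hτ
    have hmem : w₀ + τ • y ∈ halfSpace L v :=
      ⟨u0 + τ • y, L.add_mem hu0 (L.smul_mem τ hy), t0, ht0, by rw [hw0]; module⟩
    have hnrm : ‖(w₀ + τ • y) - w₀‖ < δ := by
      have h2 : ‖τ • y‖ = |τ| * ‖y‖ := by rw [norm_smul, Real.norm_eq_abs]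
      have h3 : |τ| * ‖y‖ < δ := by
        calc |τ| * ‖y‖ ≤ |τ| * (‖y‖ + 1) := by
              have := abs_nonneg τ; nlinarith
          _ < δ / (‖y‖ + 1) * (‖y‖ + 1) := by
              have : (0:ℝ) < ‖y‖ + 1 := by positivity
              exact mul_lt_mul_of_pos_right hτ this
          _ = δ := by field_simp
      simpa [h2] using h3
    simpa using hloc _ hmem hnrm
  exact hmax0.hasDerivAt_eq_zero hg

lemma LMM_deriv_zero_dir (E : X → ℝ) (E' : X → X →L[ℝ] ℝ)
    (hE : ∀ x, HasFDerivAt E (E' x) x)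
    {L : Submodule ℝ X} {v w₀ u0 : X} {t0 : ℝ}
    (hu0 : u0 ∈ L) (ht0 : 0 < t0) (hw0 : w₀ = u0 + t0 • v)
    (hmax : IsLocalMaxIn E L v w₀) :
    E' w₀ v = 0 := by
  obtain ⟨-, δ, hδ, hloc⟩ := hmax
  have hg : HasDerivAt (fun τ : ℝ => E (w₀ + τ • v)) (E' w₀ v) 0 := by
    simpa using LMM_hasDerivAt_line E E' hE w₀ v 0
  have hmax0 : IsLocalMax (fun τ : ℝ => E (w₀ + τ • v)) 0 := by
    rw [IsLocalMax, IsMaxFilter, Metric.eventually_nhds_iff]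
    refine ⟨min (δ / (‖v‖ + 1)) t0, by positivity, ?_⟩
    intro τ hτ
    rw [Real.dist_eq, sub_zero] at hτ
    have hτ1 : |τ| < δ / (‖v‖ + 1) := lt_of_lt_of_le hτ (min_le_left _ _)
    have hτ2 : |τ| < t0 := lt_of_lt_of_le hτ (min_le_right _ _)
    have hmem : w₀ + τ • v ∈ halfSpace L v := by
      refine ⟨u0, hu0, t0 + τ, ?_, by rw [hw0]; module⟩
      have := neg_abs_le τ; linarith
    have hnrm : ‖(w₀ + τ • v) - w₀‖ < δ := by
      have h2 : ‖τ • v‖ = |τ| * ‖v‖ := by rw [norm_smul, Real.norm_eq_abs]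
      have h3 : |τ| * ‖v‖ < δ := by
        calc |τ| * ‖v‖ ≤ |τ| * (‖v‖ + 1) := by
              have := abs_nonneg τ; nlinarith
          _ < δ / (‖v‖ + 1) * (‖v‖ + 1) := by
              have : (0:ℝ) < ‖v‖ + 1 := by positivity
              exact mul_lt_mul_of_pos_right hτ1 this
          _ = δ := by field_simp
      simpa [h2] using h3
    simpa using hloc _ hmem hnrm
  exact hmax0.hasDerivAt_eq_zero hg

lemma LMM_normsq (v d : X) (s : ℝ) (hv : ‖v‖ = 1) (hvd : ⟪v, d⟫ = 0) :
    ‖v + s • d‖ ^ 2 = 1 + s ^ 2 * ‖d‖ ^ 2 := by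
  have h := norm_add_sq_real v (s • d)
  rw [real_inner_smul_right, hvd, norm_smul] at h
  simp only [Real.norm_eq_abs, mul_pow, sq_abs] at h
  rw [h, hv]; ring

lemma LMM_norm_ge_one (v d : X) (s : ℝ) (hv : ‖v‖ = 1) (hvd : ⟪v, d⟫ = 0) :
    1 ≤ ‖v + s • d‖ := by
  have h := LMM_normsq v d s hv hvd
  nlinarith [norm_nonneg (v + s • d), sq_nonneg (s * ‖d‖)]

lemma LMM_diff_le (v d : X) (s : ℝ) (hv : ‖v‖ = 1) (hvd : ⟪v, d⟫ = 0) (hs : 0 ≤ s) :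
    ‖(‖v + s • d‖⁻¹ • (v + s • d)) - v‖ ≤ s * ‖d‖ := by
  set N := ‖v + s • d‖ with hN
  have hN1 : 1 ≤ N := LMM_norm_ge_one v d s hv hvd
  have hN0 : (0:ℝ) < N := by linarith
  have hNsq : N ^ 2 = 1 + s ^ 2 * ‖d‖ ^ 2 := LMM_normsq v d s hv hvd
  have hnrm : ‖N⁻¹ • (v + s • d)‖ = 1 := by
    rw [norm_smul, Real.norm_eq_abs, abs_of_pos (by positivity)]
    field_simp; exact hN.symm
  have hinner : ⟪N⁻¹ • (v + s • d), v⟫ = N⁻¹ := by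
    rw [real_inner_smul_left, inner_add_left, real_inner_smul_left,
      real_inner_self_eq_norm_sq, hv]
    have hdv : ⟪d, v⟫ = 0 := by rw [real_inner_comm]; exact hvd
    rw [hdv]; ring
  have hsq : ‖(N⁻¹ • (v + s • d)) - v‖ ^ 2 = 2 - 2 * N⁻¹ := by
    rw [norm_sub_sq_real, hnrm, hinner, hv]; ring
  have key : ‖(N⁻¹ • (v + s • d)) - v‖ ^ 2 ≤ (s * ‖d‖) ^ 2 := by
    rw [hsq]
    have h1 : 2 - 2 * N⁻¹ = 2 * (N - 1) / N := by field_simp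
    rw [h1, mul_pow]
    rw [div_le_iff₀ hN0]
    nlinarith [sq_nonneg (N - 1)]
  exact le_of_pow_le_pow_left₀ (by norm_num) (by positivity) key

lemma LMM_diff_ge (v d : X) (s : ℝ) (hv : ‖v‖ = 1) (hvd : ⟪v, d⟫ = 0) (hs : 0 ≤ s) :
    s * ‖d‖ / ‖v + s • d‖ ≤ ‖(‖v + s • d‖⁻¹ • (v + s • d)) - v‖ := by
  set N := ‖v + s • d‖ with hN
  have hN1 : 1 ≤ N := LMM_norm_ge_one v d s hv hvd
  have hN0 : (0:ℝ) < N := by linarith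
  rcases eq_or_ne d 0 with rfl | hd
  · simp [norm_nonneg]
  · have hinner : ⟪(N⁻¹ • (v + s • d)) - v, d⟫ = N⁻¹ * (s * ‖d‖ ^ 2) := by
      rw [inner_sub_left, real_inner_smul_left, inner_add_left, real_inner_smul_left,
        hvd, real_inner_self_eq_norm_sq]
      ring
    have hcs := real_inner_le_norm ((N⁻¹ • (v + s • d)) - v) d
    rw [hinner] at hcs
    have hdpos : (0:ℝ) < ‖d‖ := norm_pos_iff.mpr hd
    rw [div_le_iff₀ hN0]
    have h2 : s * ‖d‖ * ‖d‖ ≤ ‖(N⁻¹ • (v + s • d)) - v‖ * N * ‖d‖ := by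
      have h3 := mul_le_mul_of_nonneg_right hcs hN0.le
      calc s * ‖d‖ * ‖d‖ = N⁻¹ * (s * ‖d‖ ^ 2) * N := by field_simp
        _ ≤ ‖(N⁻¹ • (v + s • d)) - v‖ * ‖d‖ * N := h3
        _ = ‖(N⁻¹ • (v + s • d)) - v‖ * N * ‖d‖ := by ring
    exact le_of_mul_le_mul_right h2 hdpos

lemma LMM_inner_coeff {L : Submodule ℝ X} {v' u' : X} (hv' : v' ∈ Lᗮ) (hv1 : ‖v'‖ = 1)
    (hu' : u' ∈ L) (t' : ℝ) : ⟪u' + t' • v', v'⟫ = t' := by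
  have h0 : ⟪u', v'⟫ = 0 := (Submodule.mem_orthogonal L v').1 hv' u' hu'
  rw [inner_add_left, real_inner_smul_left, real_inner_self_eq_norm_sq, hv1, h0]; ring

lemma LMM_decomp {L : Submodule ℝ X} {v' z : X} (hv' : v' ∈ Lᗮ) (hv1 : ‖v'‖ = 1)
    (hz : z ∈ halfSpace L v') :
    0 ≤ ⟪z, v'⟫ ∧ z - ⟪z, v'⟫ • v' ∈ L := by
  obtain ⟨u', hu', t', ht', rfl⟩ := hz
  rw [LMM_inner_coeff hv' hv1 hu' t']
  exact ⟨ht', by simpa using hu'⟩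

variable [CompleteSpace X]

lemma LMM_riesz (F : X →L[ℝ] ℝ) (dk : X) (hd : ∀ x, ⟪dk, x⟫ = -(F x)) :
    dk = (InnerProductSpace.toDual ℝ X).symm (-F) ∧ ‖dk‖ = ‖F‖ := by
  have h1 : InnerProductSpace.toDual ℝ X dk = -F := by
    ext y
    rw [InnerProductSpace.toDual_apply_apply]
    simpa using hd y
  constructor
  · rw [← h1, LinearIsometryEquiv.symm_apply_apply]
  · have := congrArg norm h1
    rwa [LinearIsometryEquiv.norm_map, norm_neg] at this

set_option maxHeartbeats 1000000 in
lemma LMM_descent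
    (E : X → ℝ) (E' : X → X →L[ℝ] ℝ)
    (hE : ∀ x, HasFDerivAt E (E' x) x) (hE' : Continuous E')
    (L : Submodule ℝ X) (p : X → X)
    (hp : ∀ v, v ∈ Lᗮ → ‖v‖ = 1 → IsLocalMaxIn E L v (p v))
    (hpcont : ContinuousOn p {x : X | x ∈ Lᗮ ∧ ‖x‖ = 1})
    {v₁ u₁ : X} {t₁ : ℝ} (hv₁ : v₁ ∈ Lᗮ) (hv1 : ‖v₁‖ = 1)
    (hu₁ : u₁ ∈ L) (ht₁ : 0 < t₁) (hx : p v₁ = u₁ + t₁ • v₁)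
    {dd : X} (hdd : ∀ y, ⟪dd, y⟫ = -(E' (p v₁) y)) (hdd0 : dd ≠ 0) :
    ∃ σ0 : ℝ, 0 < σ0 ∧ ∀ σ : ℝ, 0 < σ → σ < σ0 →
      E (p (‖v₁ + σ • dd‖⁻¹ • (v₁ + σ • dd))) - E (p v₁) <
        -(1/2) * t₁ * ‖dd‖ * ‖(‖v₁ + σ • dd‖⁻¹ • (v₁ + σ • dd)) - v₁‖ := by
  set S : Set X := {x : X | x ∈ Lᗮ ∧ ‖x‖ = 1} with hS
  set x := p v₁ with hxdef
  have hmax₁ := hp v₁ hv₁ hv1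
  have hEc : Continuous E := continuous_iff_continuousAt.2 fun z => (hE z).continuousAt
  -- orthogonality of dd
  have hdv : ⟪v₁, dd⟫ = 0 := by
    have h1 : E' x v₁ = 0 := LMM_deriv_zero_dir E E' hE hu₁ ht₁ hx hmax₁
    have h2 := hdd v₁
    rw [h1] at h2
    rw [real_inner_comm]; simpa using h2
  have hddL : dd ∈ Lᗮ := by
    rw [Submodule.mem_orthogonal]
    intro y hy
    have h1 : E' x y = 0 := LMM_deriv_zero_L E E' hE hmax₁ y hy
    have h2 := hdd y
    rw [h1] at h2
    rw [real_inner_comm]; simpa using h2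
  have hExdd : E' x dd = -(‖dd‖ ^ 2) := by
    have := hdd dd
    rw [real_inner_self_eq_norm_sq] at this
    linarith
  -- the curve
  set l : Filter ℝ := nhdsWithin 0 (Set.Ioi 0) with hl
  set N : ℝ → ℝ := fun σ => ‖v₁ + σ • dd‖ with hNdef
  set vt : ℝ → X := fun σ => (N σ)⁻¹ • (v₁ + σ • dd) with hvtdef
  have hN1 : ∀ σ, 1 ≤ N σ := fun σ => LMM_norm_ge_one v₁ dd σ hv1 hdv
  have hN0 : ∀ σ, (0:ℝ) < N σ := fun σ => lt_of_lt_of_le one_pos (hN1 σ)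
  have hvtS : ∀ σ, vt σ ∈ S := by
    intro σ
    refine ⟨Submodule.smul_mem _ _ (Submodule.add_mem _ hv₁ (Submodule.smul_mem _ _ hddL)), ?_⟩
    rw [norm_smul, Real.norm_eq_abs, abs_of_pos (inv_pos.2 (hN0 σ))]
    exact inv_mul_cancel₀ (hN0 σ).ne'
  have hNt : Tendsto N l (nhds 1) := by
    have h1 : Continuous (fun σ : ℝ => ‖v₁ + σ • dd‖) := by continuity
    have h2 := h1.tendsto 0
    simp only [zero_smul, add_zero, hv1] at h2
    exact h2.mono_left nhdsWithin_le_nhds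
  have hvt : Tendsto vt l (nhds v₁) := by
    have h1 : Continuous (fun σ : ℝ => v₁ + σ • dd) := by continuity
    have h2 := h1.tendsto 0
    simp only [zero_smul, add_zero] at h2
    have h3 := ((hNt.inv₀ one_ne_zero).smul (h2.mono_left nhdsWithin_le_nhds))
    rw [show ((1:ℝ)⁻¹ • v₁) = v₁ by simp] at h3
    exact h3
  have hvtW : Tendsto vt l (nhdsWithin v₁ S) :=
    tendsto_nhdsWithin_iff.2 ⟨hvt, Eventually.of_forall hvtS⟩
  have hpvt : Tendsto (fun σ => p (vt σ)) l (nhds x) :=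
    (hpcont v₁ ⟨hv₁, hv1⟩).tendsto.comp hvtW
  -- coefficients
  set tt : ℝ → ℝ := fun σ => ⟪p (vt σ), vt σ⟫ with httdef
  have htt : Tendsto tt l (nhds t₁) := by
    have h1 : Tendsto (fun σ => (⟪p (vt σ), vt σ⟫ : ℝ)) l (nhds ⟪x, v₁⟫) :=
      hpvt.inner hvt
    rwa [hx, LMM_inner_coeff hv₁ hv1 hu₁ t₁] at h1
  have httpos : ∀ σ, 0 ≤ tt σ := by
    intro σ
    exact (LMM_decomp (hvtS σ).1 (hvtS σ).2 (hp (vt σ) (hvtS σ).1 (hvtS σ).2).1).1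
  set ut : ℝ → X := fun σ => p (vt σ) - tt σ • vt σ with hutdef
  have hutL : ∀ σ, ut σ ∈ L := by
    intro σ
    exact (LMM_decomp (hvtS σ).1 (hvtS σ).2 (hp (vt σ) (hvtS σ).1 (hvtS σ).2).1).2
  have hut : Tendsto ut l (nhds u₁) := by
    have h1 := hpvt.sub (htt.smul hvt)
    have h2 : x - t₁ • v₁ = u₁ := by rw [hx]; abel
    rwa [h2] at h1
  set q : ℝ → X := fun σ => ut σ + (tt σ * (N σ)⁻¹) • v₁ with hqdef
  set r : ℝ → ℝ := fun σ => tt σ * σ * (N σ)⁻¹ with hrdef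
  have hq : Tendsto q l (nhds x) := by
    have h1 := hut.add (((htt.mul (hNt.inv₀ one_ne_zero))).smul (tendsto_const_nhds (x := v₁)))
    simp only [inv_one, mul_one] at h1
    rw [hx]; exact h1
  have hr : Tendsto r l (nhds 0) := by
    have hσ : Tendsto (fun σ : ℝ => σ) l (nhds 0) := tendsto_id.mono_left nhdsWithin_le_nhds
    have h1 := (htt.mul hσ).mul (hNt.inv₀ one_ne_zero)
    simpa using h1
  have hkey : ∀ σ, p (vt σ) = q σ + r σ • dd := by
    intro σ
    have h1 : p (vt σ) = ut σ + tt σ • vt σ := by simp only [hutdef]; module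
    rw [h1, hqdef, hrdef, hvtdef]
    simp only [hutdef, hvtdef]
    module
  -- the neighborhood data
  obtain ⟨-, δ, hδpos, hloc⟩ := hmax₁
  obtain ⟨η, hηpos, hη⟩ := Metric.continuousAt_iff.1 (hE'.continuousAt (x := x))
      (‖dd‖ / 8) (div_pos (norm_pos_iff.mpr hdd0) (by norm_num))
  -- eventual statements
  have A1 : ∀ᶠ σ in l, ‖q σ - x‖ < δ := by
    have h := Metric.tendsto_nhds.mp hq δ hδpos
    filter_upwards [h] with σ hσ
    rwa [dist_eq_norm] at hσ
  have A2 : ∀ᶠ σ in l, ‖q σ - x‖ + r σ * ‖dd‖ < η := by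
    have h1 : Tendsto (fun σ => ‖q σ - x‖ + r σ * ‖dd‖) l (nhds 0) := by
      have h2 : Tendsto (fun σ => ‖q σ - x‖) l (nhds 0) := by
        have := (hq.sub (tendsto_const_nhds (x := x))).norm
        simpa using this
      have h3 := h2.add (hr.mul (tendsto_const_nhds (x := ‖dd‖)))
      simpa using h3
    exact h1.eventually_lt tendsto_const_nhds hηpos
  have A3 : ∀ᶠ σ in l, (4/7 : ℝ) * t₁ < tt σ * (N σ)⁻¹ := by
    have h1 := htt.mul (hNt.inv₀ one_ne_zero)
    simp only [inv_one, mul_one] at h1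
    exact tendsto_const_nhds.eventually_lt h1 (by linarith)
  have A4 : ∀ᶠ σ in l, (0:ℝ) < σ := eventually_mem_nhdsWithin
  have A5 : ∀ᶠ σ in l, 0 < tt σ := tendsto_const_nhds.eventually_lt htt ht₁
  have hall := A1.and (A2.and (A3.and (A4.and A5)))
  rw [hl, eventually_nhdsWithin_iff, Metric.eventually_nhds_iff] at hall
  obtain ⟨σ0, hσ0, hsub⟩ := hall
  refine ⟨σ0, hσ0, ?_⟩
  intro σ hσpos hσlt
  have hd0 : dist σ (0:ℝ) < σ0 := by
    rw [Real.dist_eq, sub_zero, abs_of_pos hσpos]; exact hσlt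
  obtain ⟨B1, B2, B3, B4, B5⟩ := hsub hd0 hσpos
  show E (p (vt σ)) - E x < -(1/2) * t₁ * ‖dd‖ * ‖vt σ - v₁‖
  have hddpos : (0:ℝ) < ‖dd‖ := norm_pos_iff.mpr hdd0
  have hrpos : 0 < r σ := by
    have : 0 < (N σ)⁻¹ := inv_pos.2 (hN0 σ)
    exact mul_pos (mul_pos B5 B4) this
  have hqmem : q σ ∈ halfSpace L v₁ := by
    refine ⟨ut σ, hutL σ, tt σ * (N σ)⁻¹, ?_, rfl⟩
    exact mul_nonneg (httpos σ) (inv_pos.2 (hN0 σ)).le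
  have hEq : E (q σ) ≤ E x := hloc (q σ) hqmem B1
  -- mean value theorem
  obtain ⟨c, hc, hceq⟩ := exists_hasDerivAt_eq_slope (fun θ => E (q σ + θ • dd))
      (fun θ => E' (q σ + θ • dd) dd) hrpos
      ((hEc.comp (continuous_const.add (continuous_id.smul continuous_const))).continuousOn)
      (fun θ _ => LMM_hasDerivAt_line E E' hE (q σ) dd θ)
  have hval : E (p (vt σ)) - E (q σ) = r σ * E' (q σ + c • dd) dd := by
    rw [hceq]
    have h0 : q σ + (0:ℝ) • dd = q σ := by simp
    rw [hkey σ, h0]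
    field_simp
    rw [sub_zero, mul_div_cancel_right₀ _ hrpos.ne']
  -- bound the derivative term
  have hξ : ‖(q σ + c • dd) - x‖ < η := by
    have h1 : ‖(q σ + c • dd) - x‖ ≤ ‖q σ - x‖ + c * ‖dd‖ := by
      have h2 : (q σ + c • dd) - x = (q σ - x) + c • dd := by abel
      rw [h2]
      refine (norm_add_le _ _).trans ?_
      rw [norm_smul, Real.norm_eq_abs, abs_of_pos hc.1]
    have h3 : c * ‖dd‖ ≤ r σ * ‖dd‖ := mul_le_mul_of_nonneg_right hc.2.le hddpos.le
    linarith
  have hE'ξ : ‖E' (q σ + c • dd) - E' x‖ < ‖dd‖ / 8 := by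
    have := hη (show dist (q σ + c • dd) x < η by rwa [dist_eq_norm])
    rwa [dist_eq_norm] at this
  have happ : E' (q σ + c • dd) dd ≤ -‖dd‖^2 + ‖dd‖/8 * ‖dd‖ := by
    have h1 : E' (q σ + c • dd) dd = E' x dd + (E' (q σ + c • dd) - E' x) dd := by
      simp [ContinuousLinearMap.sub_apply]
    have h2 : (E' (q σ + c • dd) - E' x) dd ≤ ‖E' (q σ + c • dd) - E' x‖ * ‖dd‖ := by
      refine le_trans (le_abs_self _) ?_
      rw [← Real.norm_eq_abs]
      exact (E' (q σ + c • dd) - E' x).le_opNorm dd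
    have h3 : ‖E' (q σ + c • dd) - E' x‖ * ‖dd‖ ≤ ‖dd‖/8 * ‖dd‖ :=
      mul_le_mul_of_nonneg_right hE'ξ.le hddpos.le
    rw [h1, hExdd]
    linarith
  have hfin1 : E (p (vt σ)) - E x ≤ r σ * (-‖dd‖^2 + ‖dd‖/8 * ‖dd‖) := by
    have := mul_le_mul_of_nonneg_left happ hrpos.le
    linarith
  have hdiff : ‖vt σ - v₁‖ ≤ σ * ‖dd‖ := LMM_diff_le v₁ dd σ hv1 hdv B4.le
  have hfin2 : -(1/2) * t₁ * ‖dd‖ * (σ * ‖dd‖) ≤ -(1/2) * t₁ * ‖dd‖ * ‖vt σ - v₁‖ := by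
    have hc0 : -(1/2) * t₁ * ‖dd‖ ≤ 0 := by nlinarith
    exact mul_le_mul_of_nonpos_left hdiff hc0
  have hr7 : (4/7) * t₁ * σ < r σ := by
    have := mul_lt_mul_of_pos_right B3 B4
    calc (4/7) * t₁ * σ = 4/7 * t₁ * σ := by ring
      _ < tt σ * (N σ)⁻¹ * σ := this
      _ = r σ := by rw [hrdef]; ring
  have hfin3 : r σ * (-‖dd‖^2 + ‖dd‖/8 * ‖dd‖) < -(1/2) * t₁ * ‖dd‖ * (σ * ‖dd‖) := by
    nlinarith [mul_lt_mul_of_pos_right hr7 (show (0:ℝ) < (7/8)*‖dd‖^2 by positivity)]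
  linarith

end LMMaux

set_option maxHeartbeats 1600000 in
/-- **Convergence of the local minimax iteration** (Li–Zhou, Theorems 3.1 and 3.2):
the sequence `w^k = p(v^k)` generated by the local minimax scheme with the dyadic step-size
rule has a convergent subsequence, and every convergent subsequence tends to a critical
point of `E`. -/
theorem local_minimax_convergence
    {X : Type*} [NormedAddCommGroup X] [InnerProductSpace ℝ X] [CompleteSpace X]
    (E : X → ℝ) (E' : X → X →L[ℝ] ℝ)
    (hE : ∀ x, HasFDerivAt E (E' x) x) (hE' : Continuous E')
    (PS : ∀ u : ℕ → X, (∃ M : ℝ, ∀ k, |E (u k)| ≤ M) →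
      Tendsto (fun k => ‖E' (u k)‖) atTop (nhds 0) →
      ∃ φ : ℕ → ℕ, StrictMono φ ∧ ∃ x : X, Tendsto (u ∘ φ) atTop (nhds x))
    (L : Submodule ℝ X) (hL : IsClosed (L : Set X))
    (p : X → X)
    (hp : ∀ v, v ∈ Lᗮ → ‖v‖ = 1 → IsLocalMaxIn E L v (p v))
    (lam : ℝ) (hlam : 0 < lam)
    (v : ℕ → X) (hv : ∀ k, v k ∈ Lᗮ ∧ ‖v k‖ = 1)
    (w : ℕ → X) (hw : ∀ k, w k = p (v k))
    (u : ℕ → X) (t : ℕ → ℝ)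
    (hu : ∀ k, u k ∈ L) (ht : ∀ k, 0 ≤ t k)
    (hwut : ∀ k, w k = u k + t k • v k)
    (d : ℕ → X) (hd : ∀ k, ∀ x : X, ⟪d k, x⟫ = -(E' (w k) x))
    (vs : ℕ → ℝ → X)
    (hvs : ∀ k, ∀ s : ℝ, vs k s = ‖v k + s • d k‖⁻¹ • (v k + s • d k))
    (m : ℕ → ℤ)
    (hm : ∀ k, ‖d k‖ < (2 : ℝ) ^ m k ∧
      E (p (vs k (lam / (2 : ℝ) ^ m k))) - E (w k) ≤
        -(1 / 2) * t k * ‖d k‖ * ‖vs k (lam / (2 : ℝ) ^ m k) - v k‖)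
    (hmmin : ∀ k, ∀ j : ℤ, j < m k →
      ¬(‖d k‖ < (2 : ℝ) ^ j ∧
        E (p (vs k (lam / (2 : ℝ) ^ j))) - E (w k) ≤
          -(1 / 2) * t k * ‖d k‖ * ‖vs k (lam / (2 : ℝ) ^ j) - v k‖))
    (s : ℕ → ℝ) (hs : ∀ k, s k = lam / (2 : ℝ) ^ m k)
    (hvrec : ∀ k, v (k + 1) = vs k (s k))
    (hpcont : ContinuousOn p {x : X | x ∈ Lᗮ ∧ ‖x‖ = 1})
    (α : ℝ) (hα : 0 < α)
    (hdist : ∀ k, ∀ y ∈ L, α ≤ ‖w k - y‖)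
    (hbddbelow : ∃ B : ℝ, ∀ x : X, x ∈ Lᗮ → ‖x‖ = 1 → B ≤ E (p x)) :
    (∃ φ : ℕ → ℕ, StrictMono φ ∧ ∃ x : X, Tendsto (fun n => w (φ n)) atTop (nhds x)) ∧
    ∀ φ : ℕ → ℕ, StrictMono φ → ∀ x : X,
      Tendsto (fun n => w (φ n)) atTop (nhds x) → E' x = 0 := by
  obtain ⟨B, hB⟩ := hbddbelow
  -- basic facts
  have htα : ∀ k, α ≤ t k := by
    intro k
    have h1 := hdist k (u k) (hu k)
    have h2 : w k - u k = t k • v k := by rw [hwut k]; abel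
    rw [h2, norm_smul, Real.norm_eq_abs, abs_of_nonneg (ht k), (hv k).2, mul_one] at h1
    exact h1
  have htpos : ∀ k, 0 < t k := fun k => lt_of_lt_of_le hα (htα k)
  have hmaxk : ∀ k, IsLocalMaxIn E L (v k) (w k) := by
    intro k; rw [hw k]; exact hp (v k) (hv k).1 (hv k).2
  have horthv : ∀ k, ⟪v k, d k⟫ = 0 := by
    intro k
    have h1 : E' (w k) (v k) = 0 :=
      LMM_deriv_zero_dir E E' hE (hu k) (htpos k) (hwut k) (hmaxk k)
    have h2 := hd k (v k)
    rw [h1] at h2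
    rw [real_inner_comm]; simpa using h2
  have horthL : ∀ k, d k ∈ Lᗮ := by
    intro k
    rw [Submodule.mem_orthogonal]
    intro y hy
    have h1 : E' (w k) y = 0 := LMM_deriv_zero_L E E' hE (hmaxk k) y hy
    have h2 := hd k y
    rw [h1] at h2
    rw [real_inner_comm]; simpa using h2
  have hdnorm : ∀ k, ‖d k‖ = ‖E' (w k)‖ := fun k => (LMM_riesz (E' (w k)) (d k) (hd k)).2
  have hdeq : ∀ k, d k = (InnerProductSpace.toDual ℝ X).symm (-(E' (w k))) :=
    fun k => (LMM_riesz (E' (w k)) (d k) (hd k)).1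
  have h2m : ∀ k, (0:ℝ) < (2:ℝ) ^ m k := fun k => zpow_pos (by norm_num) _
  have hspos : ∀ k, 0 < s k := by intro k; rw [hs k]; positivity
  -- descent inequality per step
  have hdec : ∀ k, (1/2) * t k * ‖d k‖ * ‖v (k+1) - v k‖ ≤ E (w k) - E (w (k+1)) := by
    intro k
    have h1 := (hm k).2
    rw [← hs k] at h1
    have e1 : w (k+1) = p (vs k (s k)) := by rw [hw (k+1), hvrec k]
    rw [← e1, ← hvrec k] at h1
    linarith
  have hcpos : ∀ k, 0 ≤ (1/2) * t k * ‖d k‖ * ‖v (k+1) - v k‖ := fun k =>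
    mul_nonneg (mul_nonneg (mul_nonneg (by norm_num) (ht k)) (norm_nonneg _)) (norm_nonneg _)
  have hmono : ∀ k, E (w (k+1)) ≤ E (w k) := fun k => by have := hdec k; have := hcpos k; linarith
  have hanti : Antitone (fun k => E (w k)) := antitone_nat_of_succ_le hmono
  have hlb : ∀ k, B ≤ E (w k) := fun k => by rw [hw k]; exact hB (v k) (hv k).1 (hv k).2
  have hEtend : Tendsto (fun k => E (w k)) atTop (nhds (⨅ i, E (w i))) :=
    tendsto_atTop_ciInf hanti ⟨B, fun y ⟨k, hk⟩ => hk ▸ hlb k⟩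
  have hc0 : Tendsto (fun k => (1/2) * t k * ‖d k‖ * ‖v (k+1) - v k‖) atTop (nhds 0) := by
    have h1 : Tendsto (fun k => E (w k) - E (w (k+1))) atTop (nhds 0) := by
      have h2 := hEtend.sub (hEtend.comp (tendsto_add_atTop_nat 1))
      simpa using h2
    exact squeeze_zero hcpos hdec h1
  -- step size times gradient squared tends to zero
  have hslam : ∀ k, s k * ‖d k‖ < lam := by
    intro k
    rw [hs k]
    have h1 := (hm k).1
    have h2 := h2m k
    calc lam / 2 ^ m k * ‖d k‖ = lam * (‖d k‖ / 2 ^ m k) := by ring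
      _ < lam * 1 := mul_lt_mul_of_pos_left ((div_lt_one h2).2 h1) hlam
      _ = lam := mul_one lam
  set R : ℝ := Real.sqrt (1 + lam ^ 2) with hRdef
  have hR1 : 1 ≤ R := by
    rw [show (1:ℝ) = Real.sqrt 1 from (Real.sqrt_one).symm]
    exact Real.sqrt_le_sqrt (by nlinarith)
  have hRpos : 0 < R := lt_of_lt_of_le one_pos hR1
  have hNleR : ∀ k, ‖v k + s k • d k‖ ≤ R := by
    intro k
    rw [hRdef]
    rw [Real.le_sqrt (norm_nonneg _) (by positivity)]
    rw [LMM_normsq (v k) (d k) (s k) (hv k).2 (horthv k)]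
    have h1 := hslam k
    have h2 : 0 ≤ s k * ‖d k‖ := mul_nonneg (hspos k).le (norm_nonneg _)
    nlinarith
  have hDge : ∀ k, s k * ‖d k‖ / R ≤ ‖v (k+1) - v k‖ := by
    intro k
    have h1 := LMM_diff_ge (v k) (d k) (s k) (hv k).2 (horthv k) (hspos k).le
    have h2 : s k * ‖d k‖ / R ≤ s k * ‖d k‖ / ‖v k + s k • d k‖ :=
      div_le_div_of_nonneg_left (mul_nonneg (hspos k).le (norm_nonneg _))
        (lt_of_lt_of_le one_pos (LMM_norm_ge_one (v k) (d k) (s k) (hv k).2 (horthv k)))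
        (hNleR k)
    refine h2.trans (h1.trans_eq ?_)
    rw [hvrec k, hvs k (s k)]
  have hsd2 : Tendsto (fun k => s k * ‖d k‖ ^ 2) atTop (nhds 0) := by
    have hbound : ∀ k, s k * ‖d k‖ ^ 2 ≤
        (2 * R / α) * ((1/2) * t k * ‖d k‖ * ‖v (k+1) - v k‖) := by
      intro k
      have hDpos : 0 ≤ ‖v (k+1) - v k‖ := norm_nonneg _
      have h1 : s k * ‖d k‖ ≤ R * ‖v (k+1) - v k‖ := by
        have := hDge k
        rwa [div_le_iff₀ hRpos, mul_comm ‖v (k+1) - v k‖ R] at this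
      have h6 : s k * ‖d k‖ ^ 2 ≤ R * ‖v (k+1) - v k‖ * ‖d k‖ := by
        have := mul_le_mul_of_nonneg_right h1 (norm_nonneg (d k))
        nlinarith [this]
      have h2 : α * (‖d k‖ * ‖v (k+1) - v k‖) ≤ t k * (‖d k‖ * ‖v (k+1) - v k‖) :=
        mul_le_mul_of_nonneg_right (htα k) (by positivity)
      have h4 := mul_le_mul_of_nonneg_left h2 (div_pos hRpos hα).le
      have e5 : R / α * (α * (‖d k‖ * ‖v (k+1) - v k‖)) = R * ‖v (k+1) - v k‖ * ‖d k‖ := by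
        field_simp
      have e6 : R / α * (t k * (‖d k‖ * ‖v (k+1) - v k‖)) =
          (2 * R / α) * ((1/2) * t k * ‖d k‖ * ‖v (k+1) - v k‖) := by ring
      rw [e5, e6] at h4
      linarith
    have hposb : ∀ k, 0 ≤ s k * ‖d k‖ ^ 2 := fun k => mul_nonneg (hspos k).le (by positivity)
    refine squeeze_zero hposb hbound ?_
    have := hc0.const_mul (2 * R / α)
    simpa using this
  -- ====== Part 2 : every convergent subsequence limit is a critical point ======
  have key2 : ∀ φ : ℕ → ℕ, StrictMono φ → ∀ x : X,
      Tendsto (fun n => w (φ n)) atTop (nhds x) → E' x = 0 := by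
    intro φ hφ x hlim
    by_contra hne
    -- orthogonal projection onto Lᗮ
    haveI : CompleteSpace Lᗮ := (Submodule.isClosed_orthogonal L).completeSpace_coe
    haveI : Submodule.HasOrthogonalProjection Lᗮ := Submodule.HasOrthogonalProjection.ofCompleteSpace Lᗮ
    have hPw : ∀ k, ((Lᗮ.orthogonalProjectionOnto (w k)) : X) = t k • v k := by
      intro k
      rw [hwut k, map_add]
      have h1 : Lᗮ.orthogonalProjectionOnto (u k) = 0 :=
        Submodule.orthogonalProjectionOnto_apply_of_mem_orthogonal (K := Lᗮ)
          (Submodule.le_orthogonal_orthogonal L (hu k))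
      have h2 : ((Lᗮ.orthogonalProjectionOnto (t k • v k)) : X) = t k • v k :=
        (Submodule.starProjection_eq_self_iff (K := Lᗮ)).2 (Submodule.smul_mem _ _ (hv k).1)
      rw [Submodule.coe_add, h1, h2]
      simp
    set z : X := (Lᗮ.orthogonalProjectionOnto x : X) with hzdef
    have hzmem : z ∈ Lᗮ := SetLike.coe_mem _
    have htv : Tendsto (fun n => t (φ n) • v (φ n)) atTop (nhds z) := by
      have h1 : Continuous (fun y : X => ((Lᗮ.orthogonalProjectionOnto y : X))) :=
        continuous_subtype_val.comp (Lᗮ.orthogonalProjectionOnto).continuous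
      have h2 := (h1.tendsto x).comp hlim
      refine h2.congr ?_
      intro n
      exact hPw (φ n)
    have htn : Tendsto (fun n => t (φ n)) atTop (nhds ‖z‖) := by
      have h1 := htv.norm
      refine h1.congr ?_
      intro n
      rw [norm_smul, Real.norm_eq_abs, abs_of_nonneg (ht (φ n)), (hv (φ n)).2, mul_one]
    have hzα : α ≤ ‖z‖ := ge_of_tendsto' htn (fun n => htα (φ n))
    have hzpos : (0:ℝ) < ‖z‖ := lt_of_lt_of_le hα hzα
    set v₁ : X := ‖z‖⁻¹ • z with hv₁def
    have hv₁mem : v₁ ∈ Lᗮ := Submodule.smul_mem _ _ hzmem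
    have hv₁norm : ‖v₁‖ = 1 := by
      rw [hv₁def, norm_smul, Real.norm_eq_abs, abs_of_pos (inv_pos.2 hzpos)]
      exact inv_mul_cancel₀ hzpos.ne'
    have hvtop : Tendsto (fun n => v (φ n)) atTop (nhds v₁) := by
      have h1 := (htn.inv₀ hzpos.ne').smul htv
      refine h1.congr ?_
      intro n
      rw [inv_smul_smul₀ (lt_of_lt_of_le hα (htα (φ n))).ne']
    have hutop : Tendsto (fun n => u (φ n)) atTop (nhds (x - z)) := by
      have h1 := hlim.sub htv
      refine h1.congr ?_
      intro n
      rw [hwut (φ n)]; abel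
    have huL : x - z ∈ L :=
      hL.mem_of_tendsto hutop (Eventually.of_forall (fun n => hu (φ n)))
    have hxz : x = (x - z) + ‖z‖ • v₁ := by
      rw [hv₁def, smul_inv_smul₀ hzpos.ne']; abel
    have hpv₁ : p v₁ = x := by
      have h1 : Tendsto (fun n => v (φ n)) atTop
          (nhdsWithin v₁ {x : X | x ∈ Lᗮ ∧ ‖x‖ = 1}) :=
        tendsto_nhdsWithin_iff.2 ⟨hvtop, Eventually.of_forall (fun n => ⟨(hv (φ n)).1, (hv (φ n)).2⟩)⟩
      have h2 : Tendsto (fun n => p (v (φ n))) atTop (nhds (p v₁)) :=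
        (hpcont v₁ ⟨hv₁mem, hv₁norm⟩).tendsto.comp h1
      have h3 : Tendsto (fun n => p (v (φ n))) atTop (nhds x) := by
        refine hlim.congr ?_
        intro n
        rw [hw (φ n)]
      exact tendsto_nhds_unique h2 h3
    -- the limiting gradient
    set dd : X := (InnerProductSpace.toDual ℝ X).symm (-(E' x)) with hdddef
    have hddprop : ∀ y, ⟪dd, y⟫ = -(E' x y) := by
      intro y
      rw [hdddef, InnerProductSpace.toDual_symm_apply]
      simp
    have hdd0 : dd ≠ 0 := by
      intro h
      apply hne
      ext y
      have h1 := hddprop y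
      rw [h] at h1
      simp only [inner_zero_left] at h1
      simpa using h1.symm
    have hddprop' : ∀ y, ⟪dd, y⟫ = -(E' (p v₁) y) := by rw [hpv₁]; exact hddprop
    -- descent lemma at the limit point
    obtain ⟨σ0, hσ0pos, hdesc⟩ := LMM_descent E E' hE hE' L p hp hpcont hv₁mem hv₁norm
      huL hzpos (hpv₁.trans hxz) hddprop' hdd0
    -- choose the dyadic level j
    obtain ⟨n0, hn0⟩ := pow_unbounded_of_one_lt (max ‖dd‖ (lam / σ0)) (one_lt_two (α := ℝ))
    set j : ℤ := (n0 : ℤ) with hjdef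
    have h2j : (2:ℝ) ^ j = 2 ^ n0 := zpow_natCast 2 n0
    have h2jpos : (0:ℝ) < 2 ^ j := zpow_pos (by norm_num) _
    have hjd : ‖dd‖ < (2:ℝ) ^ j := by
      rw [h2j]; exact lt_of_le_of_lt (le_max_left _ _) hn0
    set σ : ℝ := lam / (2:ℝ) ^ j with hσdef
    have hσpos : 0 < σ := div_pos hlam h2jpos
    have hσlt : σ < σ0 := by
      rw [hσdef, div_lt_iff₀ h2jpos]
      have h1 : lam / σ0 < (2:ℝ) ^ j := by
        rw [h2j]; exact lt_of_le_of_lt (le_max_right _ _) hn0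
      rw [div_lt_iff₀ hσ0pos] at h1
      linarith [mul_comm σ0 ((2:ℝ) ^ j)]
    -- convergence of the gradients along the subsequence
    have hdtend : Tendsto (fun n => d (φ n)) atTop (nhds dd) := by
      have h1 : Tendsto (fun n => E' (w (φ n))) atTop (nhds (E' x)) :=
        (hE'.tendsto x).comp hlim
      have h2 := ((InnerProductSpace.toDual ℝ X).symm.continuous.tendsto (-(E' x))).comp h1.neg
      refine h2.congr ?_
      intro n
      rw [Function.comp_apply, ← hdeq (φ n)]
    have hdntend : Tendsto (fun n => ‖d (φ n)‖) atTop (nhds ‖dd‖) := hdtend.norm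
    -- the curve at fixed step σ along the subsequence
    have hv₁dd : ⟪v₁, dd⟫ = 0 := by
      have h1 : E' x v₁ = 0 := by
        rw [← hpv₁]
        exact LMM_deriv_zero_dir E E' hE huL hzpos (hpv₁.trans hxz)
          (hp v₁ hv₁mem hv₁norm)
      have h2 := hddprop v₁
      rw [h1] at h2
      rw [real_inner_comm]; simpa using h2
    have hddL : dd ∈ Lᗮ := by
      rw [Submodule.mem_orthogonal]
      intro y hy
      have h1 : E' x y = 0 := by
        rw [← hpv₁]
        exact LMM_deriv_zero_L E E' hE (hp v₁ hv₁mem hv₁norm) y hy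
      have h2 := hddprop y
      rw [h1] at h2
      rw [real_inner_comm]; simpa using h2
    have hN₁ : (1:ℝ) ≤ ‖v₁ + σ • dd‖ := LMM_norm_ge_one v₁ dd σ hv₁norm hv₁dd
    have hN₁pos : (0:ℝ) < ‖v₁ + σ • dd‖ := lt_of_lt_of_le one_pos hN₁
    set vt₁ : X := ‖v₁ + σ • dd‖⁻¹ • (v₁ + σ • dd) with hvt₁def
    have hvt₁S : vt₁ ∈ Lᗮ ∧ ‖vt₁‖ = 1 := by
      constructor
      · exact Submodule.smul_mem _ _ (Submodule.add_mem _ hv₁mem (Submodule.smul_mem _ _ hddL))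
      · rw [hvt₁def, norm_smul, Real.norm_eq_abs, abs_of_pos (inv_pos.2 hN₁pos)]
        exact inv_mul_cancel₀ hN₁pos.ne'
    have hztend : Tendsto (fun n => v (φ n) + σ • d (φ n)) atTop (nhds (v₁ + σ • dd)) :=
      hvtop.add (hdtend.const_smul σ)
    have hvttend : Tendsto (fun n => vs (φ n) σ) atTop (nhds vt₁) := by
      have h1 := (hztend.norm.inv₀ hN₁pos.ne').smul hztend
      refine h1.congr ?_
      intro n
      rw [hvs (φ n) σ]
    have hvtS : ∀ n, vs (φ n) σ ∈ Lᗮ ∧ ‖vs (φ n) σ‖ = 1 := by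
      intro n
      have hN : (1:ℝ) ≤ ‖v (φ n) + σ • d (φ n)‖ :=
        LMM_norm_ge_one _ _ _ (hv (φ n)).2 (horthv (φ n))
      have hNpos : (0:ℝ) < ‖v (φ n) + σ • d (φ n)‖ := lt_of_lt_of_le one_pos hN
      constructor
      · rw [hvs (φ n) σ]
        exact Submodule.smul_mem _ _
          (Submodule.add_mem _ (hv (φ n)).1 (Submodule.smul_mem _ _ (horthL (φ n))))
      · rw [hvs (φ n) σ, norm_smul, Real.norm_eq_abs, abs_of_pos (inv_pos.2 hNpos)]
        exact inv_mul_cancel₀ hNpos.ne'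
    have hpvttend : Tendsto (fun n => p (vs (φ n) σ)) atTop (nhds (p vt₁)) := by
      have h1 : Tendsto (fun n => vs (φ n) σ) atTop
          (nhdsWithin vt₁ {x : X | x ∈ Lᗮ ∧ ‖x‖ = 1}) :=
        tendsto_nhdsWithin_iff.2 ⟨hvttend, Eventually.of_forall (fun n => ⟨(hvtS n).1, (hvtS n).2⟩)⟩
      exact (hpcont vt₁ ⟨hvt₁S.1, hvt₁S.2⟩).tendsto.comp h1
    have hEc : Continuous E := continuous_iff_continuousAt.2 fun z => (hE z).continuousAt
    -- LHS and RHS convergence + strict limit inequality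
    have hLHS : Tendsto (fun n => E (p (vs (φ n) σ)) - E (w (φ n))) atTop
        (nhds (E (p vt₁) - E (p v₁))) := by
      have h1 := (hEc.tendsto (p vt₁)).comp hpvttend
      have h2 := (hEc.tendsto x).comp hlim
      rw [hpv₁]
      exact h1.sub h2
    have hRHS : Tendsto (fun n =>
        -(1/2) * t (φ n) * ‖d (φ n)‖ * ‖vs (φ n) σ - v (φ n)‖) atTop
        (nhds (-(1/2) * ‖z‖ * ‖dd‖ * ‖vt₁ - v₁‖)) := by
      have h1 : Tendsto (fun n => ‖vs (φ n) σ - v (φ n)‖) atTop (nhds ‖vt₁ - v₁‖) :=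
        (hvttend.sub hvtop).norm
      have h2 := ((htn.const_mul (-(1/2):ℝ)).mul hdntend).mul h1
      refine h2.congr ?_
      intro n
      ring
    have hstrict := hdesc σ hσpos hσlt
    have hEv2 : ∀ᶠ n in atTop,
        E (p (vs (φ n) (lam / (2:ℝ) ^ j))) - E (w (φ n)) ≤
          -(1 / 2) * t (φ n) * ‖d (φ n)‖ * ‖vs (φ n) (lam / (2:ℝ) ^ j) - v (φ n)‖ := by
      have h1 := hLHS.eventually_lt hRHS (by
        rw [hvt₁def]
        exact hstrict)
      filter_upwards [h1] with n hn
      have e : lam / (2:ℝ) ^ j = σ := rfl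
      rw [e]
      exact le_of_lt (by linarith [hn])
    have hEv1 : ∀ᶠ n in atTop, ‖d (φ n)‖ < (2:ℝ) ^ j :=
      hdntend.eventually_lt tendsto_const_nhds hjd
    -- minimality of m forces m (φ n) ≤ j eventually
    have hEv3 : ∀ᶠ n in atTop, σ ≤ s (φ n) := by
      filter_upwards [hEv1, hEv2] with n h1 h2
      have hmle : m (φ n) ≤ j := by
        by_contra hlt
        push_neg at hlt
        exact hmmin (φ n) j hlt ⟨h1, h2⟩
      rw [hs (φ n), hσdef]
      exact div_le_div_of_nonneg_left hlam.le (zpow_pos (by norm_num) _)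
        (zpow_le_zpow_right₀ (by norm_num) hmle)
    -- contradiction with s k * ‖d k‖² → 0
    have hsdφ : Tendsto (fun n => s (φ n) * ‖d (φ n)‖ ^ 2) atTop (nhds 0) :=
      hsd2.comp hφ.tendsto_atTop
    have hddn : (0:ℝ) < ‖dd‖ := norm_pos_iff.2 hdd0
    have hEv4 : ∀ᶠ n in atTop, ‖dd‖ / 2 < ‖d (φ n)‖ :=
      tendsto_const_nhds.eventually_lt hdntend (by linarith)
    have hEv5 : ∀ᶠ n in atTop, s (φ n) * ‖d (φ n)‖ ^ 2 < σ * (‖dd‖ / 2) ^ 2 := by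
      exact hsdφ.eventually_lt (tendsto_const_nhds (x := σ * (‖dd‖ / 2) ^ 2)) (by positivity)
    obtain ⟨n, h3, h4, h5⟩ := (hEv3.and (hEv4.and hEv5)).exists
    have h6 : σ * (‖dd‖ / 2) ^ 2 ≤ s (φ n) * ‖d (φ n)‖ ^ 2 := by
      have h7 : (‖dd‖ / 2) ^ 2 ≤ ‖d (φ n)‖ ^ 2 := by nlinarith [norm_nonneg (d (φ n))]
      have h8 := mul_le_mul h3 h7 (by positivity) (hspos (φ n)).le
      linarith
    linarith
  -- ====== Part 1 : existence of a convergent subsequence ======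
  have key1 : ∃ φ : ℕ → ℕ, StrictMono φ ∧ ∃ x : X,
      Tendsto (fun n => w (φ n)) atTop (nhds x) := by
    by_cases hcase : ∃ ε > (0:ℝ), ∀ᶠ k in atTop, ε ≤ ‖d k‖
    · -- gradients bounded away from zero: v is Cauchy and w converges
      obtain ⟨ε, hε, hev⟩ := hcase
      obtain ⟨K, hK⟩ := eventually_atTop.1 hev
      -- the descent quantities are summable
      have hsumc : Summable (fun k => (1/2) * t k * ‖d k‖ * ‖v (k+1) - v k‖) := by
        refine summable_of_sum_range_le hcpos (c := E (w 0) - B) ?_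
        intro n
        have h1 : ∑ i ∈ Finset.range n, ((1/2) * t i * ‖d i‖ * ‖v (i+1) - v i‖) ≤
            ∑ i ∈ Finset.range n, (E (w i) - E (w (i+1))) :=
          Finset.sum_le_sum (fun i _ => hdec i)
        rw [Finset.sum_range_sub' (fun i => E (w i)) n] at h1
        have h2 := hlb n
        linarith
      have hsumD : Summable (fun k => ‖v (k+1) - v k‖) := by
        rw [← summable_nat_add_iff K]
        have h1 : Summable (fun n => (2 / (α * ε)) *
            ((1/2) * t (n + K) * ‖d (n + K)‖ * ‖v (n + K + 1) - v (n + K)‖)) :=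
          ((summable_nat_add_iff K).2 hsumc).mul_left _
        refine Summable.of_nonneg_of_le (fun n => norm_nonneg _) ?_ h1
        intro n
        have hdk : ε ≤ ‖d (n + K)‖ := hK (n + K) (Nat.le_add_left K n)
        have htk := htα (n + K)
        have hDk : (0:ℝ) ≤ ‖v (n + K + 1) - v (n + K)‖ := norm_nonneg _
        have hεα : 0 < α * ε := mul_pos hα hε
        have h2 : α * ε * ‖v (n + K + 1) - v (n + K)‖ ≤
            t (n + K) * ‖d (n + K)‖ * ‖v (n + K + 1) - v (n + K)‖ := by
          apply mul_le_mul_of_nonneg_right _ hDk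
          exact mul_le_mul htk hdk hε.le (le_trans hα.le htk)
        have h3 := mul_le_mul_of_nonneg_left h2 (inv_pos.2 hεα).le
        have e1 : (α * ε)⁻¹ * (α * ε * ‖v (n + K + 1) - v (n + K)‖) =
            ‖v (n + K + 1) - v (n + K)‖ := by
          field_simp
        have e2 : (α * ε)⁻¹ * (t (n + K) * ‖d (n + K)‖ * ‖v (n + K + 1) - v (n + K)‖) =
            2 / (α * ε) * ((1/2) * t (n + K) * ‖d (n + K)‖ * ‖v (n + K + 1) - v (n + K)‖) := by
          ring
        rw [e1, e2] at h3
        exact h3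
      have hcauchy : CauchySeq v := by
        refine cauchySeq_of_dist_le_of_summable (fun k => ‖v (k+1) - v k‖) ?_ hsumD
        intro n
        rw [dist_eq_norm, norm_sub_rev]
      obtain ⟨v₁, hv₁⟩ := cauchySeq_tendsto_of_complete hcauchy
      have hv₁mem : v₁ ∈ Lᗮ :=
        (Submodule.isClosed_orthogonal L).mem_of_tendsto hv₁
          (Eventually.of_forall (fun k => (hv k).1))
      have hv₁norm : ‖v₁‖ = 1 := by
        have h1 := hv₁.norm
        have h2 : Tendsto (fun k => ‖v k‖) atTop (nhds 1) := by
          refine tendsto_const_nhds.congr ?_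
          intro k
          exact ((hv k).2).symm
        exact (tendsto_nhds_unique h2 h1).symm
      refine ⟨id, strictMono_id, p v₁, ?_⟩
      have h1 : Tendsto v atTop (nhdsWithin v₁ {x : X | x ∈ Lᗮ ∧ ‖x‖ = 1}) :=
        tendsto_nhdsWithin_iff.2 ⟨hv₁, Eventually.of_forall (fun k => ⟨(hv k).1, (hv k).2⟩)⟩
      have h2 : Tendsto (fun k => p (v k)) atTop (nhds (p v₁)) :=
        (hpcont v₁ ⟨hv₁mem, hv₁norm⟩).tendsto.comp h1
      refine h2.congr ?_
      intro k
      exact (hw k).symm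
    · -- gradients have a subsequence tending to zero: use (PS)
      push_neg at hcase
      have hfreq : ∀ n : ℕ, ∃ᶠ k in atTop, ‖d k‖ < 1 / (n + 1) := by
        intro n
        have h1 := hcase (1 / (n + 1)) (by positivity)
        refine h1.mono ?_
        intro k hk
        exact hk
      obtain ⟨ψ, hψ, hψp⟩ := extraction_forall_of_frequently hfreq
      have hgrad : Tendsto (fun n => ‖E' (w (ψ n))‖) atTop (nhds 0) := by
        refine squeeze_zero (fun n => norm_nonneg _) (fun n => ?_)
          tendsto_one_div_add_atTop_nhds_zero_nat
        rw [← hdnorm (ψ n)]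
        exact (hψp n).le
      have hbddE : ∃ M : ℝ, ∀ n, |E ((fun n => w (ψ n)) n)| ≤ M := by
        refine ⟨max |E (w 0)| |B|, fun n => ?_⟩
        have h1 : E (w (ψ n)) ≤ E (w 0) := hanti (Nat.zero_le (ψ n))
        have h2 := hlb (ψ n)
        rw [abs_le]
        constructor
        · have := neg_abs_le B
          have := le_max_right |E (w 0)| |B|
          linarith
        · have := le_abs_self (E (w 0))
          have := le_max_left |E (w 0)| |B|
          linarith
      obtain ⟨φ', hφ', x, hx⟩ := PS (fun n => w (ψ n)) hbddE hgrad
      exact ⟨ψ ∘ φ', hψ.comp hφ', x, hx⟩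
  exact ⟨key1, key2⟩
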